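/- Let n ≥ 1 and A ∈ GL_n(ℂ) with minimal polynomial m(X) of degree p, and let C_m be the companion matrix of m. Then for every polynomial q ∈ ℂ[X] and every vector λ = (λ_1, …, λ_p) ∈ ℂ^p one has q(A) · (Σ_{i=1}^p λ_i·A^{−i}) = Σ_{i=1}^p (q(C_m)·λ)_i·A^{−i}, where q(A) and q(C_m) denote evaluation of q at the respective matrices and q(C_m)·λ is a matrix–vector product. -/

import Mathlib

/-- The companion matrix of the monic polynomial
`X^p − c_{p−1}X^{p−1} − ⋯ − c_1 X − c_0` (where `c i` is the coefficient `c_i`):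
its first column is `(c_{p−1}, …, c_0)ᵗ`, its `(i, i+1)` entries are `1`,
and all other entries are `0`. -/
def companionOf (p : ℕ) (c : Fin p → ℂ) : Matrix (Fin p) (Fin p) ℂ :=
  Matrix.of fun i j : Fin p =>
    if (j : ℕ) = (i : ℕ) + 1 then 1 else if (j : ℕ) = 0 then c i.rev else 0

/-- if `A` has minimal polynomial `m = X^p − c_{p−1}X^{p−1} − ⋯ − c_0` with
companion matrix `C_m`, then for every polynomial `q` and every `λ ∈ ℂ^p`,
`q(A) · (Σ_{i=1}^p λ_i A^{−i}) = Σ_{i=1}^p (q(C_m) λ)_i A^{−i}` (zero-based: index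
`i : Fin p` corresponds to the basis element `A^{−1−i}`). -/
theorem aeval_mul_span_basis_eq_companion_mulVec (n : ℕ) (hn : 1 ≤ n)
    (A : Matrix (Fin n) (Fin n) ℂ) (hA : IsUnit A) (p : ℕ) (hp : 1 ≤ p)
    (c : Fin p → ℂ)
    (hm : minpoly ℂ A =
      Polynomial.X ^ p - ∑ i : Fin p, Polynomial.C (c i) * Polynomial.X ^ (i : ℕ))
    (q : Polynomial ℂ) (lam : Fin p → ℂ) :
    Polynomial.aeval A q * (∑ i : Fin p, lam i • A ^ (-1 - (i : ℤ))) =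
      ∑ i : Fin p, (Polynomial.aeval (companionOf p c) q).mulVec lam i • A ^ (-1 - (i : ℤ)) := by
  have hdet : IsUnit A.det := (Matrix.isUnit_iff_isUnit_det A).mp hA
  set Cm := companionOf p c with hCm
  have h0 := minpoly.aeval ℂ A
  rw [hm] at h0
  have hAp : A ^ p = ∑ i : Fin p, c i • A ^ (i : ℕ) := by
    have := sub_eq_zero.mp (by simpa [map_sub, map_sum, Algebra.smul_def] using h0)
    simpa [Algebra.smul_def] using this
  have hcol : ∀ j : Fin p, (∑ i : Fin p, Cm i j • A ^ (-1 - (i : ℤ))) = A ^ (-(j : ℤ)) := by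
    rintro ⟨jv, hj⟩
    match jv with
    | 0 =>
      have hC : ∀ i : Fin p, Cm i ⟨0, hj⟩ = c i.rev := by
        intro i; simp [hCm, companionOf]
      simp only [hC]
      have hre : ∑ i : Fin p, c i.rev • A ^ (-1 - ((i : ℕ) : ℤ))
          = ∑ i : Fin p, (c i • A ^ (i : ℕ)) * A ^ (-(p : ℤ)) := by
        refine Fintype.sum_bijective Fin.rev Fin.rev_bijective _ _ fun x => ?_
        have h1 : (-1 - ((x : ℕ) : ℤ)) = ((x.rev : ℕ) : ℤ) + -(p : ℤ) := by
          rw [Fin.val_rev]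
          have := x.isLt
          omega
        rw [h1, Matrix.zpow_add hdet, zpow_natCast, Matrix.smul_mul]
      rw [hre, ← Finset.sum_mul, ← hAp, ← zpow_natCast A p, ← Matrix.zpow_add hdet]
      simp
    | k + 1 =>
      have hC : ∀ i : Fin p, Cm i ⟨k + 1, hj⟩ = if i = ⟨k, by omega⟩ then 1 else 0 := by
        intro i
        simp only [hCm, companionOf, Matrix.of_apply]
        rcases eq_or_ne i (⟨k, by omega⟩ : Fin p) with h | h
        · simp [h]
        · have hne : (k : ℕ) + 1 ≠ (i : ℕ) + 1 := by
            intro hc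
            exact h (Fin.ext (show (i : ℕ) = k by omega))
          simp [hne, h, show (k : ℕ) ≠ (i : ℕ) by omega]
      simp only [hC, ite_smul, one_smul, zero_smul, Finset.sum_ite_eq', Finset.mem_univ,
        if_true]
      show A ^ (-1 - (k : ℤ)) = A ^ (-((k + 1 : ℕ) : ℤ))
      congr 1
      push_cast
      ring
  have key : ∀ lam : Fin p → ℂ,
      A * (∑ i : Fin p, lam i • A ^ (-1 - (i : ℤ)))
        = ∑ i : Fin p, Cm.mulVec lam i • A ^ (-1 - (i : ℤ)) := by
    intro lam
    have lhs : A * (∑ i : Fin p, lam i • A ^ (-1 - (i : ℤ)))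
        = ∑ j : Fin p, lam j • A ^ (-(j : ℤ)) := by
      rw [Finset.mul_sum]
      refine Finset.sum_congr rfl fun j _ => ?_
      rw [Matrix.mul_smul, show (-(j : ℤ)) = 1 + (-1 - (j : ℤ)) by ring,
        Matrix.zpow_one_add hdet]
    rw [lhs]
    have rhs : ∑ i : Fin p, Cm.mulVec lam i • A ^ (-1 - (i : ℤ))
        = ∑ j : Fin p, lam j • (∑ i : Fin p, Cm i j • A ^ (-1 - (i : ℤ))) := by
      simp only [Matrix.mulVec, dotProduct, Finset.sum_smul, Finset.smul_sum, smul_smul]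
      rw [Finset.sum_comm]
      refine Finset.sum_congr rfl fun j _ => Finset.sum_congr rfl fun i _ => by ring_nf
    rw [rhs]
    exact Finset.sum_congr rfl fun j _ => by rw [hcol j]
  induction q using Polynomial.induction_on generalizing lam with
  | C a =>
    simp only [Polynomial.aeval_C, Algebra.algebraMap_eq_smul_one, Matrix.smul_mulVec,
      Matrix.one_mulVec, smul_mul_assoc, one_mul, Finset.smul_sum, Pi.smul_apply,
      smul_eq_mul, smul_smul]
  | add f g hf hg =>
    simp only [map_add, add_mul, Matrix.add_mulVec, Pi.add_apply, add_smul,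
      Finset.sum_add_distrib, hf, hg]
  | monomial k a ih =>
    have hq : (Polynomial.aeval A) (Polynomial.C a * Polynomial.X ^ (k + 1))
        = (Polynomial.aeval A) (Polynomial.C a * Polynomial.X ^ k) * A := by
      rw [pow_succ, ← mul_assoc, map_mul, Polynomial.aeval_X]
    have hq' : (Polynomial.aeval Cm) (Polynomial.C a * Polynomial.X ^ (k + 1))
        = (Polynomial.aeval Cm) (Polynomial.C a * Polynomial.X ^ k) * Cm := by
      rw [pow_succ, ← mul_assoc, map_mul, Polynomial.aeval_X]
    rw [hq, hq', mul_assoc, key lam, ih (Cm.mulVec lam), ← Matrix.mulVec_mulVec]
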